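/- Let R be a valuation domain with maximal ideal P and A a proper ideal of R. Then R/A is Hausdorff in the R/A-topology if and only if A ≠ Pa for every nonzero a ∈ R. -/

import Mathlib

open Pointwise

section Defs
universe u v
variable (R : Type u) [CommRing R]

/-- `U` is a pure submodule of its ambient module: `rU = U ∩ rM` for all `r`. -/
def IsPureSub {M : Type v} [AddCommGroup M] [Module R M] (U : Submodule R M) : Prop :=
  ∀ (r : R) (x : M), x ∈ U → (∃ m : M, r • m = x) → ∃ u ∈ U, r • u = x

/-- `U` is uniserial: its submodules are totally ordered by inclusion. -/
def IsUniserialSub {M : Type v} [AddCommGroup M] [Module R M] (U : Submodule R M) : Prop :=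
  ∀ A B : Submodule R ↥U, A ≤ B ∨ B ≤ A

/-- `U` is a direct summand of its ambient module. -/
def IsSummand {M : Type v} [AddCommGroup M] [Module R M] (U : Submodule R M) : Prop :=
  ∃ V : Submodule R M, IsCompl U V

/-- A (torsion-free) module is separable if every pure uniserial submodule is a summand. -/
def IsSeparableMod (M : Type v) [AddCommGroup M] [Module R M] : Prop :=
  ∀ U : Submodule R M, IsPureSub R U → IsUniserialSub R U → IsSummand R U

/-- `R/A` is complete in the `R/A`-topology: every coherent family of cosets
`(aᵢ + Bᵢ)` with `⋂ᵢ Bᵢ = A` has a common point. -/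
def IsCompleteQuot (A : Ideal R) : Prop :=
  ∀ (ι : Type u) (a : ι → R) (B : ι → Ideal R),
    (∀ i, A ≤ B i) → (∀ i j, B i ≤ B j → a i - a j ∈ B j) → (⨅ i, B i) = A →
    ∃ c : R, ∀ i, c - a i ∈ B i

/-- A valuation ring with maximal ideal `P` is maximal: `R/A` is complete in the
`R/A`-topology for every proper ideal `A` with `A ≠ Pa` for all nonzero `a`. -/
def IsMaximalVD (P : Ideal R) : Prop :=
  ∀ A : Ideal R, A ≠ ⊤ → (∀ a : R, a ≠ 0 → A ≠ Ideal.span {a} * P) → IsCompleteQuot R A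

/-- A module `M` is slender if every homomorphism `R^ℕ → M` kills almost all
standard unit vectors. -/
def IsSlender (M : Type v) [AddCommGroup M] [Module R M] : Prop :=
  ∀ f : ((ℕ → R) →ₗ[R] M), ∃ n₀ : ℕ, ∀ n ≥ n₀, f (Pi.single n 1) = 0

end Defs

/-- `R/A` is Hausdorff in the `R/A`-topology iff `A ≠ Pa` for every nonzero
`a`. -/
theorem stmt_19 {R : Type u} [CommRing R] [IsDomain R] [ValuationRing R]
    (P : Ideal R) (hP : P.IsMaximal) (A : Ideal R) (hA : A ≠ ⊤) :
    sInf {B : Ideal R | A < B} = A ↔ ∀ a : R, a ≠ 0 → A ≠ Ideal.span {a} * P := by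
  have hPmax : P = IsLocalRing.maximalIdeal R := IsLocalRing.eq_maximalIdeal hP
  have hP1 : (1 : R) ∉ P := fun h => hP.ne_top (Ideal.eq_top_of_isUnit_mem _ h isUnit_one)
  constructor
  · intro h a ha hAe
    have haA : a ∉ A := by
      intro hmem
      rw [hAe, Ideal.mem_span_singleton_mul] at hmem
      obtain ⟨p, hp, hpa⟩ := hmem
      have h0 : a * (1 - p) = 0 := by rw [mul_sub, mul_one, hpa, sub_self]
      rcases mul_eq_zero.mp h0 with h1 | h1
      · exact ha h1
      · exact hP1 (by rwa [sub_eq_zero.mp h1])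
    have hmem : a ∈ sInf {B : Ideal R | A < B} := by
      rw [Submodule.mem_sInf]
      intro B hB
      obtain ⟨b, hbB, hbA⟩ := SetLike.exists_of_lt (show A < B from hB)
      rcases ValuationRing.cond a b with ⟨c, hc | hc⟩
      · have hcP : c ∉ P := fun hcP =>
          hbA (hAe ▸ (hc ▸ Ideal.mem_span_singleton_mul.mpr ⟨c, hcP, rfl⟩))
        have hcu : IsUnit c := by
          by_contra hcu
          exact hcP (hPmax ▸ IsLocalRing.mem_maximalIdeal c |>.mpr hcu)
        obtain ⟨u, rfl⟩ := hcu
        have : a = b * (↑u⁻¹ : Rˣ) := by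
          rw [← hc, mul_assoc, Units.mul_inv, mul_one]
        exact this ▸ Ideal.mul_mem_right _ B hbB
      · exact hc ▸ Ideal.mul_mem_right c B hbB
    rw [h] at hmem
    exact haA hmem
  · intro h
    refine le_antisymm ?_ (le_sInf fun B hB => hB.le)
    intro x hx
    by_contra hxA
    have hx0 : x ≠ 0 := fun h0 => hxA (h0 ▸ A.zero_mem)
    have hAxP : A ≤ Ideal.span {x} * P := by
      intro y hy
      rcases ValuationRing.cond x y with ⟨c, hc | hc⟩
      · have hcP : c ∈ P := by
          rw [hPmax]
          rw [IsLocalRing.mem_maximalIdeal]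
          intro hcu
          obtain ⟨u, rfl⟩ := hcu
          have : x = y * (↑u⁻¹ : Rˣ) := by rw [← hc, mul_assoc, Units.mul_inv, mul_one]
          exact hxA (this ▸ Ideal.mul_mem_right _ A hy)
        exact Ideal.mem_span_singleton_mul.mpr ⟨c, hcP, hc⟩
      · exact absurd (hc ▸ Ideal.mul_mem_right c A hy) hxA
    rcases lt_or_eq_of_le hAxP with hlt | heq
    · have hxm := Submodule.mem_sInf.mp hx _ hlt
      rw [Ideal.mem_span_singleton_mul] at hxm
      obtain ⟨p, hp, hpx⟩ := hxm
      have h0 : x * (1 - p) = 0 := by rw [mul_sub, mul_one, hpx, sub_self]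
      rcases mul_eq_zero.mp h0 with h1 | h1
      · exact hx0 h1
      · exact hP1 (by rwa [sub_eq_zero.mp h1])
    · exact h x hx0 heq
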